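/- Let β be a real number with β ≥ e³ − e, and let p ∈ H₁. If the function z ↦ p(z) + β·(z·p′(z))² is subordinate to z ↦ e^z on 𝔻, then p is subordinate to z ↦ e^z on 𝔻. -/

import Mathlib

open Complex

noncomputable section

/-- The open unit disk in the complex plane. -/
def unitDisk : Set ℂ := Metric.ball 0 1

/-- `f` is subordinate to `g` on the open unit disk: there is an analytic
Schwarz function `w` with `w 0 = 0`, `‖w z‖ < 1` on the disk, and `f = g ∘ w`. -/
def Subord (f g : ℂ → ℂ) : Prop :=
  ∃ w : ℂ → ℂ, DifferentiableOn ℂ w unitDisk ∧ w 0 = 0 ∧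
    (∀ z ∈ unitDisk, ‖w z‖ < 1) ∧ ∀ z ∈ unitDisk, f z = g (w z)

lemma log_norm_lt_one {ζ : ℂ} (h : ‖ζ - 1‖ < 2/5) : ‖Complex.log ζ‖ < 1 := by
  have hre : 3/5 < ζ.re := by
    have := Complex.abs_re_le_norm (ζ - 1)
    simp only [Complex.sub_re, Complex.one_re] at this
    have h' : |ζ.re - 1| < 2/5 := lt_of_le_of_lt (by simpa using this) h
    cases abs_lt.1 h' with
    | intro h1 h2 => linarith
  have him : |ζ.im| < 2/5 := by
    have := Complex.abs_im_le_norm (ζ - 1)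
    simp only [Complex.sub_im, Complex.one_im, sub_zero] at this
    exact lt_of_le_of_lt (by simpa using this) h
  have habs1 : 3/5 < ‖ζ‖ := lt_of_lt_of_le hre (Complex.re_le_norm ζ)
  have habs2 : ‖ζ‖ < 7/5 := by
    calc ‖ζ‖ = ‖(ζ - 1) + 1‖ := by ring_nf
    _ ≤ ‖ζ - 1‖ + 1 := by simpa using norm_add_le (ζ - 1) 1
    _ < 7/5 := by
      have : ‖ζ - 1‖ < 2/5 := by simpa using h
      linarith
  have hlog : |Real.log ‖ζ‖| < 2/3 := by
    rw [abs_lt]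
    constructor
    · have h1 : Real.log ‖ζ‖⁻¹ ≤ ‖ζ‖⁻¹ - 1 :=
        Real.log_le_sub_one_of_pos (by positivity)
      rw [Real.log_inv] at h1
      have h2 : ‖ζ‖⁻¹ < 5/3 := by
        rw [inv_lt_comm₀ (by linarith) (by norm_num)]; linarith
      linarith
    · have h1 : Real.log ‖ζ‖ ≤ ‖ζ‖ - 1 :=
        Real.log_le_sub_one_of_pos (by linarith)
      linarith
  have harg : |Complex.arg ζ| < 2/3 := by
    have hlt : |Complex.arg ζ| < Real.pi / 2 :=
      Complex.abs_arg_lt_pi_div_two_iff.2 (Or.inl (by linarith))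
    have htan : Real.tan (Complex.arg ζ) = ζ.im / ζ.re := Complex.tan_arg ζ
    have hb : |ζ.im / ζ.re| < 2/3 := by
      rw [abs_div, abs_of_pos (by linarith : (0:ℝ) < ζ.re)]
      rw [div_lt_iff₀ (by linarith)]
      linarith
    rcases le_or_gt 0 (Complex.arg ζ) with hpos | hneg
    · have := Real.le_tan hpos (by rwa [_root_.abs_of_nonneg hpos] at hlt)
      rw [_root_.abs_of_nonneg hpos]
      calc Complex.arg ζ ≤ Real.tan (Complex.arg ζ) := this
        _ ≤ |ζ.im / ζ.re| := by rw [htan]; exact le_abs_self _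
        _ < 2/3 := hb
    · have h2 : -Complex.arg ζ < Real.pi/2 := by rwa [abs_of_neg hneg] at hlt
      have := Real.le_tan (by linarith : (0:ℝ) ≤ -Complex.arg ζ) h2
      rw [Real.tan_neg] at this
      rw [abs_of_neg hneg]
      calc -Complex.arg ζ ≤ -Real.tan (Complex.arg ζ) := this
        _ ≤ |ζ.im / ζ.re| := by rw [htan]; exact neg_le_abs _
        _ < 2/3 := hb
  have hsq : ‖Complex.log ζ‖^2 = (Real.log ‖ζ‖)^2 + (Complex.arg ζ)^2 := by
    rw [Complex.sq_norm, Complex.normSq_apply, Complex.log_re, Complex.log_im]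
    ring
  nlinarith [norm_nonneg (Complex.log ζ), _root_.sq_abs (Real.log ‖ζ‖),
    _root_.sq_abs (Complex.arg ζ), sq_nonneg (|Real.log ‖ζ‖| - 2/3),
    sq_nonneg (|Complex.arg ζ| - 2/3), abs_nonneg (Real.log ‖ζ‖),
    abs_nonneg (Complex.arg ζ)]

theorem stmt_10 (β : ℝ) (hβ : Real.exp 1 ^ 3 - Real.exp 1 ≤ β)
    (p : ℂ → ℂ) (hp : DifferentiableOn ℂ p unitDisk) (hp0 : p 0 = 1)
    (hsub : Subord (fun z => p z + (β : ℂ) * (z * deriv p z) ^ 2) Complex.exp) :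
    Subord p Complex.exp := by
  obtain ⟨w, hw_diff, hw0, hw_lt, hw_eq⟩ := hsub
  have hopen : IsOpen unitDisk := Metric.isOpen_ball
  have hβpos : (15 : ℝ) ≤ β := by
    have h1 : (2.71 : ℝ) < Real.exp 1 := by linarith [Real.exp_one_gt_d9]
    have h2 : Real.exp 1 < 2.7182818286 := Real.exp_one_lt_d9
    have h3 : (2.71 : ℝ)^3 < Real.exp 1 ^ 3 := by
      gcongr <;> norm_num
    nlinarith [h1, h2, h3]
  -- Step 1 : the key bound
  have key : ∀ z ∈ unitDisk, ‖p z - 1‖ < 2/5 := by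
    by_contra hcon
    push_neg at hcon
    obtain ⟨z₁, hz₁, hge⟩ := hcon
    have hz₁' : ‖z₁‖ < 1 := by simpa [unitDisk] using hz₁
    set K := Metric.closedBall (0:ℂ) ‖z₁‖ ∩ {z | 2/5 ≤ ‖p z - 1‖} with hK
    have hball_sub : Metric.closedBall (0:ℂ) ‖z₁‖ ⊆ unitDisk := by
      intro z hz
      simp only [Metric.mem_closedBall, dist_zero_right] at hz
      simp only [unitDisk, Metric.mem_ball, dist_zero_right]
      exact lt_of_le_of_lt hz hz₁'
    have hKclosed : IsClosed K := by
      have : K = Metric.closedBall (0:ℂ) ‖z₁‖ ∩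
          ((fun z => ‖p z - 1‖) ⁻¹' Set.Ici (2/5 : ℝ)) := by
        ext z; simp [hK, Set.mem_inter_iff]
      rw [this]
      exact ContinuousOn.preimage_isClosed_of_isClosed
        (((hp.mono hball_sub).sub_const 1).continuousOn.norm)
        Metric.isClosed_closedBall isClosed_Ici
    have hKcomp : IsCompact K :=
      (isCompact_closedBall (0:ℂ) ‖z₁‖).of_isClosed_subset hKclosed Set.inter_subset_left
    have hKne : K.Nonempty := ⟨z₁, by
      simp only [hK, Set.mem_inter_iff, Metric.mem_closedBall, dist_zero_right,
        Set.mem_setOf_eq]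
      exact ⟨le_refl _, hge⟩⟩
    obtain ⟨z₀, hz₀K, hmin⟩ := hKcomp.exists_isMinOn hKne continuous_norm.continuousOn
    obtain ⟨hz₀ball, hz₀ge⟩ := hz₀K
    simp only [Metric.mem_closedBall, dist_zero_right] at hz₀ball
    simp only [Set.mem_setOf_eq] at hz₀ge
    set r₀ := ‖z₀‖ with hr₀
    have hz₀disk : z₀ ∈ unitDisk := by
      simp only [unitDisk, Metric.mem_ball, dist_zero_right]
      exact lt_of_le_of_lt hz₀ball hz₁'
    have hr₀pos : 0 < r₀ := by
      rcases eq_or_ne z₀ 0 with h0 | h0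
      · exfalso; rw [h0, hp0] at hz₀ge; norm_num at hz₀ge
      · simpa [hr₀] using norm_pos_iff.2 h0
    -- inside the ball of radius r₀, ‖p z - 1‖ < 2/5
    have hmaps : ∀ z : ℂ, ‖z‖ < r₀ → ‖p z - 1‖ < 2/5 := by
      intro z hz
      by_contra hge'
      push_neg at hge'
      have hzK : z ∈ K := ⟨by
        simp only [Metric.mem_closedBall, dist_zero_right]
        exact le_trans hz.le hz₀ball, hge'⟩
      exact absurd (hmin hzK) (by simpa using not_le.2 hz)
    -- Schwarz lemma on ball 0 r₀
    have hdiff : DifferentiableOn ℂ (fun z => p z - 1) (Metric.ball (0:ℂ) r₀) := by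
      apply DifferentiableOn.sub_const
      apply hp.mono
      intro z hz
      simp only [Metric.mem_ball, dist_zero_right] at hz
      simp only [unitDisk, Metric.mem_ball, dist_zero_right]
      exact lt_of_lt_of_le hz (le_trans hz₀ball hz₁'.le)
    have hmapsTo : Set.MapsTo (fun z => p z - 1) (Metric.ball (0:ℂ) r₀)
        (Metric.ball ((fun z => p z - 1) 0) (2/5)) := by
      intro z hz
      simp only [Metric.mem_ball, dist_zero_right] at hz
      simp only [hp0, sub_self, Metric.mem_ball, dist_zero_right]
      exact hmaps z hz
    have schwarz : ∀ z ∈ Metric.ball (0:ℂ) r₀, ‖p z - 1‖ ≤ (2/5)/r₀ * ‖z‖ := by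
      intro z hz
      have := Complex.dist_le_div_mul_dist_of_mapsTo_ball hdiff (hmapsTo.mono_right Metric.ball_subset_closedBall) hz
      simpa [hp0, dist_eq_norm] using this
    -- derivative along the ray through z₀
    have hpd : DifferentiableAt ℂ p z₀ := hp.differentiableAt (hopen.mem_nhds hz₀disk)
    set g : ℝ → ℂ := fun t => p ((t:ℂ) * z₀) - 1 with hg
    have h1 : HasDerivAt (fun t : ℂ => p (t * z₀) - 1) (deriv p z₀ * z₀) 1 := by
      have hmul : HasDerivAt (fun t : ℂ => t * z₀) z₀ (1:ℂ) := by
        simpa using (hasDerivAt_id (1:ℂ)).mul_const z₀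
      have hpd' : HasDerivAt p (deriv p z₀) ((fun t : ℂ => t * z₀) 1) := by
        simpa using hpd.hasDerivAt
      exact (hpd'.comp (1:ℂ) hmul).sub_const 1
    have h2 : HasDerivAt g (deriv p z₀ * z₀) 1 := h1.comp_ofReal
    have hg1 : g 1 = p z₀ - 1 := by simp [hg]
    -- bound ‖g t‖ ≤ 2/5 * t for t ∈ (0,1)
    have hbound : ∀ t : ℝ, 0 < t → t < 1 → ‖g t‖ ≤ 2/5 * t := by
      intro t ht0 ht1
      have hn : ‖(t:ℂ) * z₀‖ = t * r₀ := by
        rw [norm_mul, Complex.norm_real, Real.norm_eq_abs, abs_of_pos ht0]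
      have hmem : (t:ℂ) * z₀ ∈ Metric.ball (0:ℂ) r₀ := by
        simp only [Metric.mem_ball, dist_zero_right, hn]
        nlinarith
      have := schwarz _ hmem
      rw [hn] at this
      calc ‖g t‖ ≤ (2/5)/r₀ * (t * r₀) := this
        _ = 2/5 * t := by field_simp
    -- ‖p z₀ - 1‖ ≤ 2/5
    have hle : ‖p z₀ - 1‖ ≤ 2/5 := by
      have hcont : Filter.Tendsto (fun t : ℝ => ‖g t‖)
          (nhdsWithin 1 (Set.Iio 1)) (nhds ‖p z₀ - 1‖) := by
        have hc : Filter.Tendsto (fun t : ℝ => ‖g t‖) (nhds 1) (nhds ‖g 1‖) :=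
          h2.continuousAt.norm.tendsto
        rw [hg1] at hc
        exact hc.mono_left (nhdsWithin_le_nhds (s := Set.Iio 1))
      refine le_of_tendsto hcont ?_
      filter_upwards [Ioo_mem_nhdsLT_of_mem (by norm_num : (1:ℝ) ∈ Set.Ioc 0 1)] with t ht
      calc ‖g t‖ ≤ 2/5 * t := hbound t ht.1 ht.2
        _ ≤ 2/5 := by nlinarith [ht.2]
    -- ‖deriv p z₀ * z₀‖ ≥ 2/5
    have hderiv_ge : 2/5 ≤ ‖deriv p z₀ * z₀‖ := by
      have hslope := hasDerivAt_iff_tendsto_slope.1 h2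
      have hslope' : Filter.Tendsto (fun t : ℝ => ‖slope g 1 t‖)
          (nhdsWithin 1 (Set.Iio 1)) (nhds ‖deriv p z₀ * z₀‖) :=
        (hslope.mono_left (nhdsWithin_mono _ (fun x hx => ne_of_lt hx))).norm
      refine ge_of_tendsto hslope' ?_
      filter_upwards [Ioo_mem_nhdsLT_of_mem (by norm_num : (1:ℝ) ∈ Set.Ioc 0 1)] with t ht
      have hgt : 2/5 * (1 - t) ≤ ‖g t - g 1‖ := by
        have h3 := hbound t ht.1 ht.2
        have h4 : ‖g 1‖ - ‖g t‖ ≤ ‖g t - g 1‖ :=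
          (norm_sub_norm_le (g 1) (g t)).trans_eq (norm_sub_rev _ _)
        have h5 : 2/5 ≤ ‖g 1‖ := by rw [hg1]; exact hz₀ge
        linarith [h3, h4, h5]
      rw [slope_def_module, norm_smul, norm_inv, Real.norm_eq_abs]
      have habs : |t - 1| = 1 - t := by
        rw [abs_of_neg (by linarith [ht.1, ht.2] : t - 1 < 0)]; ring
      rw [habs, le_inv_mul_iff₀ (by linarith [ht.2] : (0:ℝ) < 1 - t)]
      linarith [hgt]
    -- final contradiction
    have hFz := hw_eq z₀ hz₀disk
    simp only at hFz
    have hwlt := hw_lt z₀ hz₀disk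
    have hexp : ‖Complex.exp (w z₀) - 1‖ ≤ 2 * ‖w z₀‖ := by
      simpa using
        Complex.norm_exp_sub_one_le (x := w z₀) (by simpa using hwlt.le)
    have hnormsq : ‖(β:ℂ) * (z₀ * deriv p z₀)^2‖ = β * ‖z₀ * deriv p z₀‖^2 := by
      rw [norm_mul, norm_pow, Complex.norm_real, Real.norm_eq_abs,
        abs_of_pos (by linarith : (0:ℝ) < β)]
    have hcomm : ‖z₀ * deriv p z₀‖ = ‖deriv p z₀ * z₀‖ := by rw [mul_comm]
    have hlow : 2 ≤ ‖Complex.exp (w z₀) - 1‖ := by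
      have heq : Complex.exp (w z₀) - 1 = (p z₀ - 1) + (β:ℂ) * (z₀ * deriv p z₀)^2 := by
        rw [← hFz]; ring
      rw [heq]
      have h6 : ‖(β:ℂ) * (z₀ * deriv p z₀)^2‖ - ‖p z₀ - 1‖ ≤
          ‖(p z₀ - 1) + (β:ℂ) * (z₀ * deriv p z₀)^2‖ := by
        have h6a := norm_sub_le ((p z₀ - 1) + (β:ℂ) * (z₀ * deriv p z₀)^2) (p z₀ - 1)
        simp only [add_sub_cancel_left] at h6a
        linarith
      have h7 : β * (2/5)^2 ≤ ‖(β:ℂ) * (z₀ * deriv p z₀)^2‖ := by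
        rw [hnormsq, hcomm]
        nlinarith [hderiv_ge, hβpos, norm_nonneg (deriv p z₀ * z₀),
          sq_nonneg (‖deriv p z₀ * z₀‖ - 2/5)]
      nlinarith
    linarith [hwlt, hexp, hlow]
  -- Step 2 : construct the Schwarz function for p
  have hre : ∀ z ∈ unitDisk, 3/5 < (p z).re := by
    intro z hz
    have h := key z hz
    have h1 := Complex.abs_re_le_norm (p z - 1)
    simp only [Complex.sub_re, Complex.one_re] at h1
    have h2 : |(p z).re - 1| < 2/5 := lt_of_le_of_lt (by simpa using h1) h
    cases abs_lt.1 h2 with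
    | intro ha hb => linarith
  have hne : ∀ z ∈ unitDisk, p z ≠ 0 := by
    intro z hz h0
    have := hre z hz
    rw [h0] at this
    simp at this
    linarith
  refine ⟨fun z => Complex.log (p z), ?_, ?_, ?_, ?_⟩
  · intro z hz
    apply DifferentiableAt.differentiableWithinAt
    exact (Complex.differentiableAt_log (Or.inl (by linarith [hre z hz]))).comp z
      (hp.differentiableAt (hopen.mem_nhds hz))
  · simp only [hp0, Complex.log_one]
  · intro z hz
    exact log_norm_lt_one (key z hz)
  · intro z hz
    rw [Complex.exp_log (hne z hz)]
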